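/- Fix positive reals ε, G and positive integers K, L, N, B with N = B·K·L, B ≥ 2. For M a positive integer let d(M) := M·(N−KL)·(KL)²·G² and let γ(M) := (G/(B−1))/(2ε·d(M)) · (1 + √(1 + 2(B−1)²·ε·d(M)/(K·G²))) be the positive root of ε·d(M)·γ² − (G/(B−1))·γ − 1/(2K) = 0. Then √M · γ(M) converges, as M → ∞, to 1/√(2ε·K³·L²·(N−KL)·G²); in particular γ(M) = Θ(1/√M). -/

import Mathlib

open Filter

/-- Proposition 2: the required SNR `γ(M)` to achieve MSE `ε` scales as `1/√M`:
`√M · γ(M)` converges to `1/√(2εK³L²(N−KL)G²)` as `M → ∞`. -/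
theorem required_snr_inverse_sqrt_M
    (ε G : ℝ) (K L N B : ℕ)
    (hε : 0 < ε) (hG : 0 < G) (hK : 0 < K) (hL : 0 < L) (hB : 2 ≤ B)
    (hN : N = B * K * L)
    (d γ : ℕ → ℝ)
    (hd : ∀ M : ℕ, d M = (M : ℝ) * ((N : ℝ) - K * L) * ((K : ℝ) * L) ^ 2 * G ^ 2)
    (hγ : ∀ M : ℕ, γ M = (G / ((B : ℝ) - 1)) / (2 * ε * d M) *
      (1 + Real.sqrt (1 + 2 * ((B : ℝ) - 1) ^ 2 * ε * d M / ((K : ℝ) * G ^ 2)))) :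
    Tendsto (fun M : ℕ => Real.sqrt M * γ M) atTop
      (nhds (1 / Real.sqrt (2 * ε * (K : ℝ) ^ 3 * (L : ℝ) ^ 2 * ((N : ℝ) - K * L) * G ^ 2))) := by
  have hB1 : (1 : ℝ) < (B : ℝ) := by exact_mod_cast Nat.lt_of_lt_of_le one_lt_two hB
  have hB0 : (0 : ℝ) < (B : ℝ) - 1 := by linarith
  have hKpos : (0 : ℝ) < (K : ℝ) := by exact_mod_cast hK
  have hLpos : (0 : ℝ) < (L : ℝ) := by exact_mod_cast hL
  have hNKL : (N : ℝ) - (K : ℝ) * L = ((B : ℝ) - 1) * K * L := by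
    have : (N : ℝ) = (B : ℝ) * K * L := by exact_mod_cast congrArg (Nat.cast : ℕ → ℝ) hN
    rw [this]; ring
  have hNKLpos : (0 : ℝ) < (N : ℝ) - (K : ℝ) * L := by
    rw [hNKL]; positivity
  set c : ℝ := ((N : ℝ) - K * L) * ((K : ℝ) * L) ^ 2 * G ^ 2 with hc
  have hcpos : 0 < c := by positivity
  set A : ℝ := (G / ((B : ℝ) - 1)) / (2 * ε * c) with hA
  set b : ℝ := 2 * ((B : ℝ) - 1) ^ 2 * ε * c / ((K : ℝ) * G ^ 2) with hb
  have hApos : 0 < A := by positivity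
  have hbpos : 0 < b := by positivity
  -- target value
  have hval : A * Real.sqrt b
      = 1 / Real.sqrt (2 * ε * (K : ℝ) ^ 3 * (L : ℝ) ^ 2 * ((N : ℝ) - K * L) * G ^ 2) := by
    have h1 : A * Real.sqrt b = Real.sqrt (A ^ 2 * b) := by
      rw [Real.sqrt_mul (by positivity), Real.sqrt_sq hApos.le]
    have h2 : A ^ 2 * b
        = (2 * ε * (K : ℝ) ^ 3 * (L : ℝ) ^ 2 * ((N : ℝ) - K * L) * G ^ 2)⁻¹ := by
      rw [hA, hb, hc]
      field_simp
    rw [h1, h2, Real.sqrt_inv, one_div]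
  clear_value c A b
  -- limits
  have l1 : Tendsto (fun M : ℕ => 1 / Real.sqrt M) atTop (nhds 0) := by
    have := (Real.continuous_sqrt.tendsto 0).comp tendsto_one_div_atTop_nhds_zero_nat
    simpa [Function.comp_def, one_div, Real.sqrt_inv] using this
  have l2 : Tendsto (fun M : ℕ => Real.sqrt (1 / (M : ℝ) + b)) atTop (nhds (Real.sqrt b)) := by
    have h0 : Tendsto (fun M : ℕ => 1 / (M : ℝ) + b) atTop (nhds (0 + b)) :=
      tendsto_one_div_atTop_nhds_zero_nat.add tendsto_const_nhds
    have := (Real.continuous_sqrt.tendsto (0 + b)).comp h0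
    simpa [Function.comp_def] using this
  have lmain : Tendsto (fun M : ℕ => A * (1 / Real.sqrt M + Real.sqrt (1 / (M : ℝ) + b)))
      atTop (nhds (A * Real.sqrt b)) := by
    simpa using ((l1.add l2).const_mul A)
  rw [← hval]
  have heq : (fun M : ℕ => A * (1 / Real.sqrt M + Real.sqrt (1 / (M : ℝ) + b))) =ᶠ[atTop]
      (fun M : ℕ => Real.sqrt M * γ M) := by
    filter_upwards [eventually_ge_atTop 1] with M hM
    have hm : (0 : ℝ) < (M : ℝ) := by exact_mod_cast hM
    have hsm : (0 : ℝ) < Real.sqrt M := Real.sqrt_pos.mpr hm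
    have hdM : d M = (M : ℝ) * c := by rw [hd M, hc]; ring
    have hγM : γ M = A / M * (1 + Real.sqrt (1 + b * M)) := by
      rw [hγ M, hdM, hA, hb]
      have e1 : 2 * ε * ((M : ℝ) * c) = (2 * ε * c) * (M : ℝ) := by ring
      have e2 : 2 * ((B : ℝ) - 1) ^ 2 * ε * ((M : ℝ) * c)
          = (2 * ((B : ℝ) - 1) ^ 2 * ε * c) * (M : ℝ) := by ring
      have h1 : (G / ((B : ℝ) - 1)) / (2 * ε * ((M : ℝ) * c))
          = (G / ((B : ℝ) - 1)) / (2 * ε * c) / M := by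
        rw [e1, ← div_div]
      have h2 : 2 * ((B : ℝ) - 1) ^ 2 * ε * ((M : ℝ) * c) / ((K : ℝ) * G ^ 2)
          = 2 * ((B : ℝ) - 1) ^ 2 * ε * c / ((K : ℝ) * G ^ 2) * M := by
        rw [e2, mul_div_right_comm]
      rw [h1, h2]
    rw [hγM]
    have hsq : Real.sqrt (1 / (M : ℝ) + b) = Real.sqrt (1 + b * M) / Real.sqrt M := by
      rw [← Real.sqrt_div (by positivity)]
      congr 1
      field_simp
    rw [hsq]
    field_simp
    linear_combination (-1 : ℝ) * Real.mul_self_sqrt hm.le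
  exact lmain.congr' heq
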